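/- Let X be an irreducible shift of finite type and f in SV(X) (summable variation). Then every equilibrium measure for f on X has full support. -/

import Mathlib

open MeasureTheory

/-- The left shift by `k` on bi-infinite sequences. `shiftZ 1` is the shift map `σ`. -/
def shiftZ {A : Type*} (k : ℤ) (x : ℤ → A) : ℤ → A := fun n => x (n + k)

/-- The word `w` occurs in `x` at position `i`. -/
def occursAt {A : Type*} (x : ℤ → A) (w : List A) (i : ℤ) : Prop :=
  ∀ j : Fin w.length, x (i + (j.1 : ℤ)) = w.get j

/-- The word `w` belongs to the language of `X`. -/
def InLanguage {A : Type*} (X : Set (ℤ → A)) (w : List A) : Prop :=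
  ∃ x ∈ X, ∃ i : ℤ, occursAt x w i

/-- A shift space: a closed, shift-invariant subset of the full shift. -/
def IsShiftSpace {A : Type*} [TopologicalSpace A] (X : Set (ℤ → A)) : Prop :=
  IsClosed X ∧ ∀ k : ℤ, ∀ x ∈ X, shiftZ k x ∈ X

/-- `x` is doubly transitive in `X`. -/
def DoublyTransitive {A : Type*} (X : Set (ℤ → A)) (x : ℤ → A) : Prop :=
  ∀ w : List A, InLanguage X w →
    (∀ N : ℤ, ∃ i : ℤ, N ≤ i ∧ occursAt x w i) ∧
    (∀ N : ℤ, ∃ i : ℤ, i ≤ N ∧ occursAt x w i)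

/-- Irreducibility: any two words of the language can be joined within the language. -/
def IrreducibleShift {A : Type*} (X : Set (ℤ → A)) : Prop :=
  ∀ u v : List A, InLanguage X u → InLanguage X v →
    ∃ w : List A, InLanguage X (u ++ w ++ v)

/-- `μ` is fully supported on `X`: every open set meeting `X` has positive measure. -/
def FullSupportOn {A : Type*} [TopologicalSpace A] [MeasurableSpace A]
    (μ : Measure (ℤ → A)) (X : Set (ℤ → A)) : Prop :=
  ∀ U : Set (ℤ → A), IsOpen U → (U ∩ X).Nonempty → 0 < μ U

/-- The Gibbs (homoclinic/tail) relation on `X`. -/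
def GibbsRel {A : Type*} (X : Set (ℤ → A)) (x y : ℤ → A) : Prop :=
  x ∈ X ∧ y ∈ X ∧ ∃ N : ℤ, ∀ n : ℤ, N < |n| → x n = y n

/-- A shift of finite type: defined by excluding a finite set of words of some length `n`. -/
def IsSFT {A : Type*} (X : Set (ℤ → A)) : Prop :=
  ∃ (n : ℕ) (F : Finset (List A)),
    X = {x | ∀ i : ℤ, (List.ofFn fun j : Fin n => x (i + (j.1 : ℤ))) ∉ F}

/-- The `k`-th variation of `f` over `X`. -/
noncomputable def varOf {A : Type*} (X : Set (ℤ → A)) (f : (ℤ → A) → ℝ) (k : ℕ) : ℝ :=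
  sSup {d : ℝ | ∃ x ∈ X, ∃ y ∈ X, (∀ i : ℤ, |i| ≤ (k : ℤ) → x i = y i) ∧ d = |f x - f y|}

/-- `f` has summable variation on `X`. -/
def HasSummableVariation {A : Type*} (X : Set (ℤ → A)) (f : (ℤ → A) → ℝ) : Prop :=
  Summable (varOf X f)

/-- `μ` is nonsingular for the relation `Rel`: the saturation of any null Borel set is null. -/
def NonsingularFor {A : Type*} [MeasurableSpace A]
    (μ : Measure (ℤ → A)) (Rel : (ℤ → A) → (ℤ → A) → Prop) : Prop :=
  ∀ S : Set (ℤ → A), MeasurableSet S → μ S = 0 → μ {y | ∃ x ∈ S, Rel x y} = 0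

/-- `μ` is an equilibrium measure for `f` on `(X, T)`, with respect to an entropy
functional `ent`. -/
def IsEquilibriumFor {A : Type*} [MeasurableSpace A]
    (ent : Measure (ℤ → A) → ℝ) (T : (ℤ → A) → (ℤ → A)) (X : Set (ℤ → A))
    (f : (ℤ → A) → ℝ) (μ : Measure (ℤ → A)) : Prop :=
  IsProbabilityMeasure μ ∧ μ X = 1 ∧ μ.map T = μ ∧
    ∀ lam : Measure (ℤ → A), IsProbabilityMeasure lam → lam X = 1 → lam.map T = lam →
      ent lam + ∫ x, f x ∂lam ≤ ent μ + ∫ x, f x ∂μ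

-- Auxiliary lemmas

lemma mul_mem_of_addclosed {Q : Set ℕ} (h0 : 0 ∈ Q)
    (hadd : ∀ a ∈ Q, ∀ b ∈ Q, a + b ∈ Q) :
    ∀ (k q : ℕ), q ∈ Q → k * q ∈ Q := by
  intro k q hq
  induction k with
  | zero => simpa using h0
  | succ k ih => rw [Nat.succ_mul]; exact hadd _ ih _ hq

lemma arith_main {Q : Set ℕ} (h0 : 0 ∈ Q)
    (hadd : ∀ a ∈ Q, ∀ b ∈ Q, a + b ∈ Q)
    {O : Set ℕ} (hO : O.Infinite) {o₀ : ℕ} (ho : o₀ ∈ O)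
    (hΔ : ∀ t ∈ O, o₀ ≤ t → t - o₀ ∈ Q)
    {ℓ₀ : ℕ} (hℓ : ℓ₀ ∈ Q) :
    ∃ t ∈ O, ∃ q ∈ Q, t = o₀ + ℓ₀ + q := by
  classical
  set H : AddSubgroup ℤ := AddSubgroup.closure ((fun q : ℕ => (q : ℤ)) '' Q) with hH
  obtain ⟨z, hz⟩ := Int.subgroup_cyclic H
  have hQH : ∀ q ∈ Q, (q : ℤ) ∈ H := fun q hq =>
    AddSubgroup.subset_closure ⟨q, hq, rfl⟩
  have hdvd : ∀ q ∈ Q, z ∣ (q : ℤ) := by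
    intro q hq
    have := hQH q hq
    rw [hz, AddSubgroup.mem_closure_singleton] at this
    obtain ⟨k, hk⟩ := this
    exact ⟨k, by rw [← hk, zsmul_eq_mul, mul_comm]; norm_cast⟩
  have hzD : ∃ u ∈ Q, ∃ v ∈ Q, z = (u : ℤ) - v := by
    have hzH : z ∈ H := by
      rw [hz]; exact AddSubgroup.subset_closure rfl
    set D : AddSubgroup ℤ :=
      { carrier := {x : ℤ | ∃ u ∈ Q, ∃ v ∈ Q, x = (u : ℤ) - v}
        zero_mem' := ⟨0, h0, 0, h0, by ring⟩
        add_mem' := by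
          rintro a b ⟨u1, hu1, v1, hv1, rfl⟩ ⟨u2, hu2, v2, hv2, rfl⟩
          exact ⟨u1 + u2, hadd _ hu1 _ hu2, v1 + v2, hadd _ hv1 _ hv2, by push_cast; ring⟩
        neg_mem' := by
          rintro a ⟨u, hu, v, hv, rfl⟩
          exact ⟨v, hv, u, hu, by ring⟩ } with hD
    have hle : H ≤ D := by
      rw [hH]
      apply AddSubgroup.closure_le .. |>.2
      rintro x ⟨q, hq, rfl⟩
      exact ⟨q, hq, 0, h0, by push_cast; ring⟩
    exact hle hzH
  obtain ⟨u, hu, v, hv, huv⟩ := hzD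
  set g : ℕ := z.natAbs with hg
  have hgdvd : ∀ q ∈ Q, g ∣ q := by
    intro q hq
    have := hdvd q hq
    exact Int.ofNat_dvd.mp (by rwa [Int.natAbs_dvd])
  obtain ⟨t₁, ht₁O, ht₁⟩ := hO.exists_gt o₀
  have hq₁ : t₁ - o₀ ∈ Q := hΔ t₁ ht₁O ht₁.le
  have hgpos : 0 < g := by
    rcases Nat.eq_zero_or_pos g with h | h
    · exfalso
      have hz0 : z = 0 := Int.natAbs_eq_zero.mp h
      have := hdvd _ hq₁
      rw [hz0, zero_dvd_iff] at this
      have : t₁ - o₀ = 0 := by exact_mod_cast this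
      omega
    · exact h
  -- extract U = V + g with U, V ∈ Q
  obtain ⟨U, V, hUQ, hVQ, hUV⟩ : ∃ U V, U ∈ Q ∧ V ∈ Q ∧ U = V + g := by
    rcases Int.natAbs_eq z with h | h
    · refine ⟨u, v, hu, hv, ?_⟩
      have : (u : ℤ) = v + g := by rw [← hg] at h; omega
      exact_mod_cast this
    · refine ⟨v, u, hv, hu, ?_⟩
      have : (v : ℤ) = u + g := by rw [← hg] at h; omega
      exact_mod_cast this
  obtain ⟨v', hv'⟩ : g ∣ V := hgdvd V hVQ
  obtain ⟨t, htO, ht⟩ := hO.exists_gt (o₀ + ℓ₀ + g * (v' * v'))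
  set s : ℕ := t - o₀ with hs
  have hsQ : s ∈ Q := hΔ t htO (by omega)
  have hsℓ : ℓ₀ ≤ s := by
    have : ℓ₀ + g * (v' * v') ≤ s := by omega
    omega
  set q : ℕ := s - ℓ₀ with hqdef
  have hgq : g ∣ q := Nat.dvd_sub (hgdvd s hsQ) (hgdvd ℓ₀ hℓ)
  obtain ⟨m, hm⟩ := hgq
  have hmbig : v' * v' < m := by
    have h1 : g * (v' * v') < q := by omega
    rw [hm] at h1
    exact lt_of_mul_lt_mul_left h1 (Nat.zero_le g)
  have hqQ : q ∈ Q := by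
    rcases Nat.eq_zero_or_pos v' with hv0 | hv0
    · -- V = 0, U = g
      have hV0 : V = 0 := by rw [hv', hv0, mul_zero]
      have hUg : U = g := by omega
      have : q = m * U := by rw [hUg, hm]; ring
      rw [this]
      exact mul_mem_of_addclosed h0 hadd m U hUQ
    · set α : ℕ := m % v' with hα
      set c : ℕ := m / v' with hc
      have hmc : v' * c + α = m := Nat.div_add_mod m v'
      have hαlt : α < v' := Nat.mod_lt m hv0
      have hcα : α ≤ c := by
        by_contra hcon
        push_neg at hcon
        have : m ≤ v' * v' := by nlinarith
        omega
      obtain ⟨d, hd⟩ : ∃ d, c = α + d := ⟨c - α, by omega⟩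
      have heq : q = α * U + d * V := by
        rw [hm, hUV, hv', ← hmc, hd]; ring
      rw [heq]
      exact hadd _ (mul_mem_of_addclosed h0 hadd α U hUQ) _
        (mul_mem_of_addclosed h0 hadd d V hVQ)
  exact ⟨t, htO, q, hqQ, by omega⟩

def glueAt {A : Type*} (a : ℤ) (x y : ℤ → A) : ℤ → A := fun i => if i < a then x i else y i

section SFT
variable {A : Type*} {n : ℕ} {F : Finset (List A)} {X : Set (ℤ → A)}

lemma shiftZ_memX
    (hXdef : X = {x : ℤ → A | ∀ i : ℤ, (List.ofFn fun j : Fin n => x (i + (j.1 : ℤ))) ∉ F})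
    (k : ℤ) {x : ℤ → A} (hx : x ∈ X) : shiftZ k x ∈ X := by
  rw [hXdef] at hx ⊢
  intro i
  have h := hx (i + k)
  have : (List.ofFn fun j : Fin n => shiftZ k x (i + (j.1 : ℤ)))
      = (List.ofFn fun j : Fin n => x (i + k + (j.1 : ℤ))) := by
    congr 1; funext j; simp only [shiftZ]; ring_nf
  rw [this]; exact h

lemma glueAt_memX
    (hXdef : X = {x : ℤ → A | ∀ i : ℤ, (List.ofFn fun j : Fin n => x (i + (j.1 : ℤ))) ∉ F})
    {x y : ℤ → A} (hx : x ∈ X) (hy : y ∈ X) (a : ℤ)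
    (hagree : ∀ i : ℤ, a ≤ i → i < a + (n : ℤ) - 1 → x i = y i) :
    glueAt a x y ∈ X := by
  rw [hXdef] at hx hy ⊢
  intro i
  rcases le_or_gt a i with h | h
  · have : (List.ofFn fun j : Fin n => glueAt a x y (i + (j.1 : ℤ)))
        = (List.ofFn fun j : Fin n => y (i + (j.1 : ℤ))) := by
      congr 1; funext j
      have hj0 : (0:ℤ) ≤ (j.1 : ℤ) := Int.natCast_nonneg _
      exact if_neg (by omega)
    rw [this]; exact hy i
  · have : (List.ofFn fun j : Fin n => glueAt a x y (i + (j.1 : ℤ)))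
        = (List.ofFn fun j : Fin n => x (i + (j.1 : ℤ))) := by
      congr 1; funext j
      by_cases hij : (i + (j.1 : ℤ)) < a
      · simp [glueAt, hij]
      · have h1 : a ≤ i + (j.1 : ℤ) := not_lt.mp hij
        have h2 : (j.1 : ℤ) < (n : ℤ) := by exact_mod_cast j.2
        simp only [glueAt, if_neg hij]
        exact (hagree _ h1 (by omega)).symm
    rw [this]; exact hx i

end SFT

section Occurs
variable {A : Type*}

lemma occursAt_shiftZ {x : ℤ → A} {w : List A} {i k : ℤ} (h : occursAt x w (i + k)) :
    occursAt (shiftZ k x) w i := by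
  intro j
  have := h j
  simp only [shiftZ]
  rw [show i + (j.1:ℤ) + k = i + k + (j.1:ℤ) by ring]
  exact this

lemma occursAt_append_left {x : ℤ → A} {P Q : List A} {i : ℤ}
    (h : occursAt x (P ++ Q) i) : occursAt x P i := by
  intro j
  have hj : (j.1 : ℕ) < (P ++ Q).length := by
    rw [List.length_append]; omega
  have h2 := h ⟨j.1, hj⟩
  simpa [List.get_eq_getElem, List.getElem_append_left] using h2

lemma occursAt_append_right {x : ℤ → A} {P Q : List A} {i : ℤ}
    (h : occursAt x (P ++ Q) i) : occursAt x Q (i + (P.length : ℤ)) := by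
  intro j
  have hj : P.length + j.1 < (P ++ Q).length := by
    rw [List.length_append]; omega
  have h2 := h ⟨P.length + j.1, hj⟩
  have : (P ++ Q).get ⟨P.length + j.1, hj⟩ = Q.get j := by
    simp [List.get_eq_getElem, List.getElem_append_right]
  rw [this] at h2
  rw [show i + (P.length : ℤ) + (j.1 : ℤ) = i + ((P.length + j.1 : ℕ) : ℤ) by push_cast; ring]
  exact h2

end Occurs

def HasBlock {A : Type*} (y : ℤ → A) (o₀ : ℤ) (m' : ℕ) (z : ℤ → A) (s : ℤ) : Prop :=
  ∀ j : ℤ, 0 ≤ j → j < (m' : ℤ) → z (s + j) = y (o₀ + j)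


-- the block-gluing lemma
lemma glue_blocks {A : Type*} {n : ℕ} {F : Finset (List A)} {X : Set (ℤ → A)}
    (hXdef : X = {x : ℤ → A | ∀ i : ℤ, (List.ofFn fun j : Fin n => x (i + (j.1 : ℤ))) ∉ F})
    {y : ℤ → A} {o₀ : ℤ}
    {z₁ z₂ : ℤ → A} (hz₁ : z₁ ∈ X) (hz₂ : z₂ ∈ X) {k₁ k₂ : ℤ}
    (hk₁ : 0 ≤ k₁) (hk₂ : 0 ≤ k₂)
    (hb₁0 : HasBlock y o₀ (n-1) z₁ 0) (hb₁k : HasBlock y o₀ (n-1) z₁ k₁)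
    (hb₂0 : HasBlock y o₀ (n-1) z₂ 0) (hb₂k : HasBlock y o₀ (n-1) z₂ k₂) :
    ∃ z ∈ X, HasBlock y o₀ (n-1) z 0 ∧ HasBlock y o₀ (n-1) z (k₁ + k₂) ∧
      ∀ i : ℤ, i < k₁ → z i = z₁ i := by
  set m' : ℕ := n - 1 with hm'
  set z₂' : ℤ → A := shiftZ (-k₁) z₂ with hz₂'def
  have hz₂'eval : ∀ i : ℤ, z₂' i = z₂ (i - k₁) := by
    intro i; simp only [hz₂'def, shiftZ]; ring_nf
  have hov : ∀ i : ℤ, k₁ ≤ i → i < k₁ + (m' : ℤ) → z₁ i = z₂' i := by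
    intro i h1 h2
    have e1 : z₁ i = y (o₀ + (i - k₁)) := by
      have := hb₁k (i - k₁) (by omega) (by omega)
      rwa [show k₁ + (i - k₁) = i by ring] at this
    have e2 : z₂' i = y (o₀ + (i - k₁)) := by
      rw [hz₂'eval]
      have := hb₂0 (i - k₁) (by omega) (by omega)
      rwa [zero_add] at this
    rw [e1, e2]
  have hnm : (n : ℤ) - 1 ≤ (m' : ℤ) := by omega
  refine ⟨glueAt k₁ z₁ z₂',
    glueAt_memX hXdef hz₁ (shiftZ_memX hXdef _ hz₂) k₁
      (fun i h1 h2 => hov i h1 (by omega)), ?_, ?_, ?_⟩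
  · intro j hj0 hjm
    rcases lt_or_ge (0 + j) k₁ with h | h
    · rw [show glueAt k₁ z₁ z₂' (0 + j) = z₁ (0 + j) from if_pos h]
      exact hb₁0 j hj0 hjm
    · rw [show glueAt k₁ z₁ z₂' (0 + j) = z₂' (0 + j) from if_neg (not_lt.mpr h)]
      rw [← hov (0 + j) h (by omega)]
      exact hb₁0 j hj0 hjm
  · intro j hj0 hjm
    have hge : ¬ (k₁ + k₂ + j < k₁) := by omega
    rw [show glueAt k₁ z₁ z₂' (k₁ + k₂ + j) = z₂' (k₁ + k₂ + j) from if_neg hge]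
    rw [hz₂'eval]
    have := hb₂k j hj0 hjm
    rwa [show k₁ + k₂ + j - k₁ = k₂ + j by ring]
  · intro i hi
    exact if_pos hi

lemma core_lemma {A : Type*} [Finite A] {n : ℕ} {F : Finset (List A)} {X : Set (ℤ → A)}
    (hXdef : X = {x : ℤ → A | ∀ i : ℤ, (List.ofFn fun j : Fin n => x (i + (j.1 : ℤ))) ∉ F})
    (hirr : IrreducibleShift X)
    {y : ℤ → A} (hy : y ∈ X) {w : List A} (hw : InLanguage X w) :
    ∃ x ∈ X, (∃ p : ℤ, occursAt x w p) ∧ ∃ N : ℤ, ∀ i : ℤ, N < |i| → x i = y i := by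
  classical
  set m' : ℕ := n - 1 with hm'def
  -- pigeonhole: an infinitely recurring block of y at nonnegative positions
  set fblk : ℕ → (Fin m' → A) := fun t j => y ((t : ℤ) + (j.1 : ℤ)) with hfblk
  obtain ⟨bf, hbf⟩ := Finite.exists_infinite_fiber fblk
  set O : Set ℕ := fblk ⁻¹' {bf} with hO
  have hOinf : O.Infinite := Set.infinite_coe_iff.mp hbf
  obtain ⟨o₀, ho₀⟩ := hOinf.nonempty
  have hblock : ∀ t ∈ O, ∀ j : ℤ, 0 ≤ j → j < (m' : ℤ) → y ((t : ℤ) + j) = y ((o₀ : ℤ) + j) := by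
    intro t ht j hj0 hjm
    have het : fblk t = bf := ht
    have heo : fblk o₀ = bf := ho₀
    have := congrFun (het.trans heo.symm) ⟨j.toNat, by omega⟩
    simpa [hfblk, Int.toNat_of_nonneg hj0] using this
  -- the set of return lengths
  set Q : Set ℕ := {k | ∃ z ∈ X, HasBlock y (o₀ : ℤ) m' z 0 ∧ HasBlock y (o₀ : ℤ) m' z (k : ℤ)}
    with hQ
  have hyo : HasBlock y (o₀ : ℤ) m' (shiftZ (o₀ : ℤ) y) 0 := by
    intro j hj0 hjm
    simp only [shiftZ, zero_add]
    rw [add_comm]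
  have h0Q : 0 ∈ Q := ⟨shiftZ (o₀ : ℤ) y, shiftZ_memX hXdef _ hy, hyo, by exact_mod_cast hyo⟩
  have haddQ : ∀ a ∈ Q, ∀ b ∈ Q, a + b ∈ Q := by
    rintro a ⟨z₁, hz₁X, hb₁0, hb₁k⟩ b ⟨z₂, hz₂X, hb₂0, hb₂k⟩
    obtain ⟨z, hzX, h0, hk, -⟩ := glue_blocks hXdef hz₁X hz₂X
      (Int.natCast_nonneg a) (Int.natCast_nonneg b) hb₁0 hb₁k hb₂0 hb₂k
    exact ⟨z, hzX, h0, by rw [Nat.cast_add]; exact hk⟩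
  have hΔQ : ∀ t ∈ O, o₀ ≤ t → t - o₀ ∈ Q := by
    intro t ht hot
    refine ⟨shiftZ (o₀ : ℤ) y, shiftZ_memX hXdef _ hy, hyo, ?_⟩
    intro j hj0 hjm
    simp only [shiftZ]
    rw [show ((t - o₀ : ℕ) : ℤ) + j + (o₀ : ℤ) = (t : ℤ) + j by push_cast; omega]
    exact hblock t ht j hj0 hjm
  -- the block word u
  set u : List A := List.ofFn (fun j : Fin m' => y ((o₀ : ℤ) + (j.1 : ℤ))) with hu
  have hulen : u.length = m' := by simp [hu]
  have huget : ∀ (j : ℕ) (hj : j < u.length), u.get ⟨j, hj⟩ = y ((o₀ : ℤ) + (j : ℤ)) := by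
    intro j hj
    simp [hu, List.get_eq_getElem, List.getElem_ofFn]
  have huL : InLanguage X u := by
    refine ⟨y, hy, (o₀ : ℤ), fun j => ?_⟩
    rw [huget j.1 j.2]
  have hblock_of_occ : ∀ (z : ℤ → A) (s : ℤ), occursAt z u s → HasBlock y (o₀ : ℤ) m' z s := by
    intro z s h j hj0 hjm
    have hj : j.toNat < u.length := by omega
    have := h ⟨j.toNat, hj⟩
    rw [huget j.toNat hj] at this
    rw [show s + j = s + (j.toNat : ℤ) by omega, this,
      show ((j.toNat : ℕ) : ℤ) = j by omega]
  -- connector through w, via irreducibility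
  obtain ⟨c, hc⟩ := hirr u w huL hw
  obtain ⟨c', hc'⟩ := hirr (u ++ c ++ w) u hc huL
  obtain ⟨z₀', hz₀'X, i₀, hocc'⟩ := hc'
  set z₀ : ℤ → A := shiftZ i₀ z₀' with hz₀
  have hz₀X : z₀ ∈ X := shiftZ_memX hXdef _ hz₀'X
  have hocc0 : occursAt z₀ ((u ++ c ++ w) ++ c' ++ u) 0 :=
    occursAt_shiftZ (by rwa [zero_add])
  have hoccu1 : occursAt z₀ u 0 :=
    occursAt_append_left (occursAt_append_left (occursAt_append_left
      (occursAt_append_left hocc0)))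
  have hoccw : occursAt z₀ w (0 + ((u ++ c).length : ℤ)) :=
    occursAt_append_right (occursAt_append_left (occursAt_append_left hocc0))
  have hoccu2 : occursAt z₀ u (0 + (((u ++ c ++ w) ++ c').length : ℤ)) :=
    occursAt_append_right hocc0
  set ℓ₀ : ℕ := ((u ++ c ++ w) ++ c').length with hℓ₀
  set p : ℕ := (u ++ c).length with hp
  have hpw : (p : ℕ) + w.length ≤ ℓ₀ := by
    simp only [hℓ₀, hp, List.length_append]; omega
  have hb₀0 : HasBlock y (o₀ : ℤ) m' z₀ 0 := hblock_of_occ z₀ 0 hoccu1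
  have hb₀ℓ : HasBlock y (o₀ : ℤ) m' z₀ (ℓ₀ : ℤ) := by
    have := hblock_of_occ z₀ _ hoccu2
    rwa [zero_add] at this
  have hℓ₀Q : ℓ₀ ∈ Q := ⟨z₀, hz₀X, hb₀0, hb₀ℓ⟩
  -- arithmetic: find a matching return time
  obtain ⟨t, htO, q, hqQ, htq⟩ := arith_main h0Q haddQ hOinf ho₀ hΔQ hℓ₀Q
  -- compose the connector with the return of length q
  obtain ⟨z₂, hz₂X, hb₂0, hb₂q⟩ := hqQ
  obtain ⟨zc, hzcX, hbc0, hbck, hzcz₀⟩ := glue_blocks hXdef hz₀X hz₂X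
    (Int.natCast_nonneg ℓ₀) (Int.natCast_nonneg q) hb₀0 hb₀ℓ hb₂0 hb₂q
  have hbct : HasBlock y (o₀ : ℤ) m' zc ((t : ℤ) - (o₀ : ℤ)) := by
    rwa [show (t : ℤ) - (o₀ : ℤ) = (ℓ₀ : ℤ) + (q : ℤ) by omega]
  have hoccwc : occursAt zc w (p : ℤ) := by
    intro j
    rw [hzcz₀ _ (by have := j.2; omega)]
    have := hoccw j
    rwa [zero_add] at this
  -- final double gluing into y
  set zc' : ℤ → A := shiftZ (-(o₀ : ℤ)) zc with hzc'
  have hzc'eval : ∀ i : ℤ, zc' i = zc (i - o₀) := by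
    intro i; simp only [hzc', shiftZ]; ring_nf
  have hzc'X : zc' ∈ X := shiftZ_memX hXdef _ hzcX
  have hnm : (n : ℤ) - 1 ≤ (m' : ℤ) := by omega
  have hto : (o₀ : ℤ) ≤ (t : ℤ) := by exact_mod_cast (by omega : o₀ ≤ t)
  -- x₁ = y on (-∞, o₀), zc' after
  set x₁ : ℤ → A := glueAt (o₀ : ℤ) y zc' with hx₁
  have hov1 : ∀ i : ℤ, (o₀ : ℤ) ≤ i → i < (o₀ : ℤ) + (m' : ℤ) → y i = zc' i := by
    intro i h1 h2
    rw [hzc'eval]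
    have := hbc0 (i - o₀) (by omega) (by omega)
    rw [zero_add] at this
    rw [this, show (o₀ : ℤ) + (i - o₀) = i by ring]
  have hx₁X : x₁ ∈ X := glueAt_memX hXdef hy hzc'X _ (fun i h1 h2 => hov1 i h1 (by omega))
  -- x = x₁ on (-∞, t), y after
  set x : ℤ → A := glueAt (t : ℤ) x₁ y with hx
  have hov2 : ∀ i : ℤ, (t : ℤ) ≤ i → i < (t : ℤ) + (m' : ℤ) → x₁ i = y i := by
    intro i h1 h2
    have hio : ¬ (i < (o₀ : ℤ)) := by omega
    rw [hx₁, show glueAt (o₀ : ℤ) y zc' i = zc' i from if_neg hio, hzc'eval]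
    have := hbct (i - t) (by omega) (by omega)
    rw [show (t : ℤ) - (o₀ : ℤ) + (i - t) = i - o₀ by ring] at this
    rw [this, ← hblock t htO (i - t) (by omega) (by omega),
      show (t : ℤ) + (i - t) = i by ring]
  have hxX : x ∈ X := glueAt_memX hXdef hx₁X hy _ (fun i h1 h2 => hov2 i h1 (by omega))
  refine ⟨x, hxX, ⟨(o₀ : ℤ) + (p : ℤ), ?_⟩, (t : ℤ), ?_⟩
  · -- w occurs in x at o₀ + p
    intro j
    have hj2 : (j.1 : ℤ) < (w.length : ℤ) := by exact_mod_cast j.2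
    have hlt : (o₀ : ℤ) + (p : ℤ) + (j.1 : ℤ) < (t : ℤ) := by
      have : (p : ℤ) + (w.length : ℤ) ≤ (ℓ₀ : ℤ) := by exact_mod_cast hpw
      omega
    have hge : ¬ ((o₀ : ℤ) + (p : ℤ) + (j.1 : ℤ) < (o₀ : ℤ)) := by omega
    rw [hx, show glueAt (t : ℤ) x₁ y ((o₀ : ℤ) + (p : ℤ) + (j.1 : ℤ))
        = x₁ ((o₀ : ℤ) + (p : ℤ) + (j.1 : ℤ)) from if_pos hlt]
    rw [hx₁, show glueAt (o₀ : ℤ) y zc' ((o₀ : ℤ) + (p : ℤ) + (j.1 : ℤ))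
        = zc' ((o₀ : ℤ) + (p : ℤ) + (j.1 : ℤ)) from if_neg hge]
    rw [hzc'eval, show (o₀ : ℤ) + (p : ℤ) + (j.1 : ℤ) - (o₀ : ℤ) = (p : ℤ) + (j.1 : ℤ) by ring]
    exact hoccwc j
  · -- tails agree
    intro i hi
    rcases lt_or_ge i (t : ℤ) with h | h
    · have hio : i < (o₀ : ℤ) := by
        have ho0 : (0 : ℤ) ≤ (o₀ : ℤ) := Int.natCast_nonneg _
        rcases le_or_gt 0 i with h' | h'
        · rw [abs_of_nonneg h'] at hi; omega
        · omega
      rw [hx, show glueAt (t : ℤ) x₁ y i = x₁ i from if_pos h,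
        hx₁, show glueAt (o₀ : ℤ) y zc' i = y i from if_pos hio]
    · rw [hx, show glueAt (t : ℤ) x₁ y i = y i from if_neg (not_lt.mpr h)]

section Meas
variable {A : Type*} [MeasurableSpace A]

lemma measurable_shiftZ (k : ℤ) : Measurable (shiftZ k : (ℤ → A) → (ℤ → A)) :=
  measurable_pi_lambda _ (fun n => measurable_pi_apply (n + k))

lemma shift_invariant (μ : Measure (ℤ → A)) (hinv : μ.map (shiftZ 1) = μ) :
    ∀ (k : ℤ) (E : Set (ℤ → A)), MeasurableSet E → μ (shiftZ k ⁻¹' E) = μ E := by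
  have h1 : ∀ E : Set (ℤ → A), MeasurableSet E → μ (shiftZ 1 ⁻¹' E) = μ E := by
    intro E hE
    conv_rhs => rw [← hinv]
    rw [Measure.map_apply (measurable_shiftZ 1) hE]
  have hcomp : ∀ a : ℤ, (shiftZ a : (ℤ → A) → _) ∘ shiftZ 1 = shiftZ (a + 1) := by
    intro a; funext x i; simp only [Function.comp, shiftZ]; ring_nf
  intro k
  induction k using Int.induction_on with
  | zero =>
    intro E hE
    have : (shiftZ 0 : (ℤ → A) → _) = id := by funext x i; simp [shiftZ]
    rw [this]; rfl
  | succ k ih =>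
    intro E hE
    have : (shiftZ ((k : ℤ) + 1) ⁻¹' E : Set (ℤ → A)) = shiftZ 1 ⁻¹' (shiftZ (k : ℤ) ⁻¹' E) := by
      rw [← hcomp (k : ℤ), Set.preimage_comp]
    rw [this, h1 _ ((measurable_shiftZ _) hE)]
    exact ih E hE
  | pred k ih =>
    intro E hE
    have h2 : (shiftZ (-(k : ℤ)) ⁻¹' E : Set (ℤ → A))
        = shiftZ 1 ⁻¹' (shiftZ (-(k : ℤ) - 1) ⁻¹' E) := by
      rw [← Set.preimage_comp, hcomp]
      norm_num
    have h3 := ih E hE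
    rw [h2, h1 _ ((measurable_shiftZ _) hE)] at h3
    exact h3

end Meas

/-- on an irreducible SFT, every equilibrium measure for a potential of
summable variation has full support. (The Lanford-Ruelle theorem — equilibrium measures on
SFTs for SV potentials are Gibbs, hence nonsingular for the Gibbs relation — is supplied as
the hypothesis `hLR` on the entropy functional `ent`.) -/
theorem stmt16 {A : Type*} [Fintype A] [TopologicalSpace A] [DiscreteTopology A]
    [MeasurableSpace A] [BorelSpace A]
    (X : Set (ℤ → A)) (hX : IsShiftSpace X) (hSFT : IsSFT X) (hirr : IrreducibleShift X)
    (f : (ℤ → A) → ℝ) (hf : Continuous f) (hsv : HasSummableVariation X f)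
    (ent : Measure (ℤ → A) → ℝ)
    (hLR : ∀ μ : Measure (ℤ → A), IsEquilibriumFor ent (shiftZ 1) X f μ →
      NonsingularFor μ (GibbsRel X))
    (μ : Measure (ℤ → A)) (hμ : IsEquilibriumFor ent (shiftZ 1) X f μ) :
    FullSupportOn μ X := by
  classical
  obtain ⟨n, F, hXdef⟩ := hSFT
  have hμfull := hμ
  obtain ⟨hprob, hX1, hinv, -⟩ := hμ
  intro U hU hne
  by_contra hpos
  have hU0 : μ U = 0 := by
    simpa using (not_lt.mp hpos : μ U ≤ 0)
  obtain ⟨y₀, hy₀U, hy₀X⟩ := hne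
  -- a cylinder around y₀ inside U
  obtain ⟨I, v, hv, hsub⟩ := (isOpen_pi_iff.mp hU) y₀ hy₀U
  set m : ℕ := I.sup (fun i => i.natAbs) with hm
  set C : Set (ℤ → A) := {z | ∀ i : ℤ, |i| ≤ (m : ℤ) → z i = y₀ i} with hC
  have hCU : C ⊆ U := by
    intro z hz
    apply hsub
    intro i hi
    have hle : i.natAbs ≤ m := Finset.le_sup hi
    have : z i = y₀ i := hz i (by rw [Int.abs_eq_natAbs]; exact_mod_cast hle)
    rw [this]
    exact (hv i hi).2
  have hCmeas : MeasurableSet C := by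
    have : C = ⋂ i : ℤ, {z : ℤ → A | |i| ≤ (m : ℤ) → z i = y₀ i} := by
      ext z; simp [hC, Set.mem_iInter]
    rw [this]
    refine MeasurableSet.iInter (fun i => ?_)
    by_cases h : |i| ≤ (m : ℤ)
    · have : {z : ℤ → A | |i| ≤ (m : ℤ) → z i = y₀ i}
          = (fun z : ℤ → A => z i) ⁻¹' {y₀ i} := by
        ext z; simp [h]
      rw [this]
      exact (measurable_pi_apply i) ((isOpen_discrete _).measurableSet : MeasurableSet {y₀ i})
    · have : {z : ℤ → A | |i| ≤ (m : ℤ) → z i = y₀ i} = Set.univ := by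
        ext z; simp [h]
      rw [this]; exact MeasurableSet.univ
  have hC0 : μ C = 0 := le_antisymm (hU0 ▸ measure_mono hCU) (zero_le)
  -- the word of y₀ on [-m, m]
  set w : List A := List.ofFn (fun j : Fin (2 * m + 1) => y₀ (-(m : ℤ) + (j.1 : ℤ))) with hw
  have hwget : ∀ (j : ℕ) (hj : j < w.length), w.get ⟨j, hj⟩ = y₀ (-(m : ℤ) + (j : ℤ)) := by
    intro j hj
    rw [List.get_ofFn]
    rfl
  have hwlen : w.length = 2 * m + 1 := by simp [hw]
  have hwL : InLanguage X w := by
    refine ⟨y₀, hy₀X, -(m : ℤ), fun j => ?_⟩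
    rw [hwget j.1 j.2]
  -- occurrence sets
  have hEk : ∀ k : ℤ, {z : ℤ → A | occursAt z w k} = shiftZ (k + m) ⁻¹' C := by
    intro k
    ext z
    constructor
    · intro hz i hi
      have habs := abs_le.mp hi
      have hj : (i + m).toNat < w.length := by rw [hwlen]; omega
      have := hz ⟨(i + m).toNat, hj⟩
      rw [hwget _ hj] at this
      simp only [shiftZ]
      rw [show i + (k + (m : ℤ)) = k + ((i + m).toNat : ℤ) by omega, this]
      congr 1
      omega
    · intro hz j
      have hj2 : (j.1 : ℤ) < 2 * (m : ℤ) + 1 := by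
        have h2 := j.2
        omega
      have := hz ((j.1 : ℤ) - m) (abs_le.mpr ⟨by omega, by omega⟩)
      simp only [shiftZ] at this
      rw [show (j.1 : ℤ) - (m : ℤ) + (k + (m : ℤ)) = k + (j.1 : ℤ) by ring] at this
      rw [this, hwget j.1 j.2]
      congr 1
      omega
  set S : Set (ℤ → A) := ⋃ k : ℤ, {z | occursAt z w k} with hS
  have hSmeas : MeasurableSet S := by
    refine MeasurableSet.iUnion (fun k => ?_)
    rw [hEk k]
    exact (measurable_shiftZ _) hCmeas
  have hS0 : μ S = 0 := by
    refine measure_iUnion_null (fun k => ?_)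
    rw [hEk k, shift_invariant μ hinv _ _ hCmeas]
    exact hC0
  -- nonsingularity kills the saturation
  have hns := hLR μ hμfull S hSmeas hS0
  have hsat : X ⊆ {y | ∃ x ∈ S, GibbsRel X x y} := by
    intro y hy
    obtain ⟨x, hxX, ⟨p, hocc⟩, N, hN⟩ := core_lemma hXdef hirr hy hwL
    exact ⟨x, Set.mem_iUnion.mpr ⟨p, hocc⟩, hxX, hy, N, hN⟩
  have hle : μ X ≤ μ {y | ∃ x ∈ S, GibbsRel X x y} := measure_mono hsat
  rw [hns, hX1] at hle
  simp at hle
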